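/- Let ℓ ≥ 2, 1 ≤ i ≤ ℓ, and fix real β, δ > 0. If z ∈ (0,1] satisfies z > i/ℓ + ⌈δ·log₂ℓ⌉/ℓ + (β·ln ℓ/(2ℓ))^{1/2}, then F_i(z) > (1 − ℓ^{−β})(1 − ℓ^{−δ}). -/

import Mathlib

open scoped Classical

noncomputable section

/-- `E_j`: the span of the first `j` standard basis vectors of `F₂^ℓ`. -/
def Ej (ℓ j : ℕ) : Submodule (ZMod 2) (Fin ℓ → ZMod 2) :=
  Submodule.span (ZMod 2) {v | ∃ k : Fin ℓ, (k : ℕ) < j ∧ v = Pi.single k 1}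

/-- The average conditional erasure probability `p_{i|s}` (with `i` 1-indexed): the fraction
of `(ℓ-s)`-dimensional subspaces `R` of `F₂^ℓ` with `R ∩ (E_i \ E_{i-1}) = ∅`. -/
def pis (ℓ i s : ℕ) : ℝ :=
  (Nat.card {R : Submodule (ZMod 2) (Fin ℓ → ZMod 2) //
      Module.finrank (ZMod 2) ↥R = ℓ - s ∧
      (R : Set (Fin ℓ → ZMod 2)) ∩ ((Ej ℓ i : Set (Fin ℓ → ZMod 2)) \
        (Ej ℓ (i - 1) : Set (Fin ℓ → ZMod 2))) = ∅} : ℝ) /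
  (Nat.card {R : Submodule (ZMod 2) (Fin ℓ → ZMod 2) //
      Module.finrank (ZMod 2) ↥R = ℓ - s} : ℝ)

/-- The 2-Gaussian binomial coefficient `[a choose t]₂`, as a real number. -/
def gaussBinom (a t : ℕ) : ℝ :=
  ∏ j ∈ Finset.range t, ((2 ^ a - 2 ^ j : ℝ) / (2 ^ t - 2 ^ j : ℝ))

/-- The average erasure probability `F_i(z)` of the `i`-th bit-channel (`i` 1-indexed). -/
def Favg (ℓ i : ℕ) (z : ℝ) : ℝ :=
  ∑ s ∈ Finset.range (ℓ + 1), (Nat.choose ℓ s : ℝ) * z ^ s * (1 - z) ^ (ℓ - s) * pis ℓ i s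


open Real Finset

set_option maxHeartbeats 2000000

theorem hoeff_bernoulli (z : ℝ) (hz0 : 0 ≤ z) (hz1 : z ≤ 1) (t : ℝ) (ht : 0 ≤ t) :
    1 - z + z * exp (-t) ≤ exp (t ^ 2 / 8 - t * z) := by
  set D : ℝ → ℝ := fun t => 1 - z + z * exp (-t) with hD
  have hDpos : ∀ u : ℝ, 0 < D u := by
    intro u
    rcases lt_or_eq_of_le hz1 with h | h
    · have : 0 ≤ z * exp (-u) := mul_nonneg hz0 (exp_pos _).le
      simp only [hD]; linarith
    · simp only [hD, h]; simpa using (exp_pos (-u))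
  have hDderiv : ∀ u : ℝ, HasDerivAt D (-(z * exp (-u))) u := by
    intro u
    have h1 : HasDerivAt (fun u : ℝ => exp (-u)) (-exp (-u)) u := by
      simpa using ((hasDerivAt_neg u).exp)
    have := ((h1.const_mul z).const_add (1 - z))
    have e : -(z * exp (-u)) = z * -exp (-u) := by ring
    rw [e]; exact this
  set g1 : ℝ → ℝ := fun u => u / 4 - z + z * exp (-u) / D u with hg1
  set g : ℝ → ℝ := fun u => u ^ 2 / 8 - u * z - log (D u) with hg
  have hgderiv : ∀ u : ℝ, HasDerivAt g (g1 u) u := by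
    intro u
    have h1 : HasDerivAt (fun u : ℝ => log (D u)) (-(z * exp (-u)) / D u) u :=
      (hDderiv u).log (hDpos u).ne'
    have h2 : HasDerivAt (fun u : ℝ => u ^ 2 / 8 - u * z) (2 * u / 8 - z) u := by
      have := ((hasDerivAt_pow 2 u).div_const 8).sub ((hasDerivAt_id u).mul_const z)
      rw [show (2:ℝ)*u/8 - z = ((2:ℕ):ℝ) * u^(2-1) / 8 - 1 * z by norm_num]; exact this
    have := h2.sub h1
    refine this.congr_deriv ?_
    simp only [hg1]
    ring
  have hg1deriv : ∀ u : ℝ, HasDerivAt g1 (1 / 4 - z * exp (-u) * (1 - z) / (D u) ^ 2) u := by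
    intro u
    have hu : HasDerivAt (fun u : ℝ => z * exp (-u)) (-(z * exp (-u))) u := by
      have h1 : HasDerivAt (fun u : ℝ => exp (-u)) (-exp (-u)) u := by
        simpa using ((hasDerivAt_neg u).exp)
      simpa [mul_neg] using (h1.const_mul z)
    have hdiv := hu.div (hDderiv u) (hDpos u).ne'
    have h2 : HasDerivAt (fun u : ℝ => u / 4 - z) (1 / 4) u := by
      simpa using ((hasDerivAt_id u).div_const 4).sub_const z
    have := h2.add hdiv
    refine this.congr_deriv ?_
    have hDu : D u = 1 - z + z * exp (-u) := rfl
    field_simp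
    ring
  have hg1nonneg : ∀ u : ℝ, 0 ≤ 1 / 4 - z * exp (-u) * (1 - z) / (D u) ^ 2 := by
    intro u
    have hDu : D u = z * exp (-u) + (1 - z) := by simp only [hD]; ring
    set a := z * exp (-u) with ha
    set b := 1 - z with hb
    have ha0 : 0 ≤ a := mul_nonneg hz0 (exp_pos _).le
    have hb0 : 0 ≤ b := by simp [hb]; linarith
    have hsq : 4 * (a * b) ≤ (a + b) ^ 2 := by nlinarith [sq_nonneg (a - b)]
    have hD2 : (0:ℝ) < (D u) ^ 2 := pow_pos (hDpos u) 2
    rw [sub_nonneg, div_le_iff₀ hD2, hDu]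
    nlinarith
  -- g1 is monotone, g1 0 = 0
  have hg1mono : Monotone g1 := by
    apply monotone_of_deriv_nonneg
    · intro u; exact (hg1deriv u).differentiableAt
    · intro u; rw [(hg1deriv u).deriv]; exact hg1nonneg u
  have hg10 : g1 0 = 0 := by
    simp only [hg1, hD]
    norm_num
  have hg1nn : ∀ u : ℝ, 0 ≤ u → 0 ≤ g1 u := by
    intro u hu; rw [← hg10]; exact hg1mono hu
  have hgmono : MonotoneOn g (Set.Ici 0) := by
    apply monotoneOn_of_deriv_nonneg (convex_Ici 0)
    · exact Continuous.continuousOn (by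
        fun_prop (disch := intro x; exact (hDpos x).ne'))
    · intro u hu; exact (hgderiv u).differentiableAt.differentiableWithinAt
    · intro u hu
      rw [(hgderiv u).deriv]
      exact hg1nn u (by simpa using interior_subset hu)
  have hg0 : g 0 = 0 := by simp [hg, hD]
  have hgt : 0 ≤ g t := by
    rw [← hg0]
    exact hgmono (by simp) (by simpa using ht) ht
  have : log (D t) ≤ t ^ 2 / 8 - t * z := by
    simp only [hg] at hgt; linarith
  calc D t = exp (log (D t)) := (exp_log (hDpos t)).symm
    _ ≤ exp (t ^ 2 / 8 - t * z) := exp_le_exp.mpr this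
open Real Finset

lemma binom_sum_one (ℓ : ℕ) (z : ℝ) :
    ∑ s ∈ range (ℓ + 1), (ℓ.choose s : ℝ) * z ^ s * (1 - z) ^ (ℓ - s) = 1 := by
  have h := add_pow z (1 - z) ℓ
  calc ∑ s ∈ range (ℓ + 1), (ℓ.choose s : ℝ) * z ^ s * (1 - z) ^ (ℓ - s)
      = ∑ s ∈ range (ℓ + 1), z ^ s * (1 - z) ^ (ℓ - s) * (ℓ.choose s : ℝ) := by
        apply Finset.sum_congr rfl; intro s hs; ring
    _ = (z + (1 - z)) ^ ℓ := h.symm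
    _ = 1 := by norm_num

lemma chernoff_tail (ℓ m : ℕ) (hm : m ≤ ℓ) (z : ℝ) (hz0 : 0 ≤ z) (hz1 : z ≤ 1)
    (t : ℝ) (ht : 0 ≤ t) :
    ∑ s ∈ range m, (ℓ.choose s : ℝ) * z ^ s * (1 - z) ^ (ℓ - s)
      ≤ exp (t * m + ℓ * (t ^ 2 / 8 - t * z)) := by
  have h1z : (0:ℝ) ≤ 1 - z := by linarith
  have step1 : ∑ s ∈ range m, (ℓ.choose s : ℝ) * z ^ s * (1 - z) ^ (ℓ - s)
      ≤ exp (t * m) * ∑ s ∈ range (ℓ + 1),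
          (z * exp (-t)) ^ s * (1 - z) ^ (ℓ - s) * (ℓ.choose s : ℝ) := by
    rw [Finset.mul_sum]
    have sub : ∑ s ∈ range m, (ℓ.choose s : ℝ) * z ^ s * (1 - z) ^ (ℓ - s)
        ≤ ∑ s ∈ range m, exp (t * m) * ((z * exp (-t)) ^ s * (1 - z) ^ (ℓ - s) * (ℓ.choose s : ℝ)) := by
      apply Finset.sum_le_sum
      intro s hs
      have hsm : (s:ℝ) ≤ m := by exact_mod_cast (Finset.mem_range.mp hs).le
      have : (z * exp (-t)) ^ s = z ^ s * exp (-(t * s)) := by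
        rw [mul_pow, ← Real.exp_nat_mul]
        ring_nf
      rw [this]
      have hexp : (1:ℝ) ≤ exp (t * m) * exp (-(t * s)) := by
        rw [← Real.exp_add]
        have : 0 ≤ t * m + -(t * s) := by nlinarith
        calc (1:ℝ) = exp 0 := by simp
          _ ≤ _ := exp_le_exp.mpr this
      have hnn : 0 ≤ (ℓ.choose s : ℝ) * z ^ s * (1 - z) ^ (ℓ - s) :=
        mul_nonneg (mul_nonneg (Nat.cast_nonneg _) (pow_nonneg hz0 _)) (pow_nonneg h1z _)
      nlinarith [hnn, hexp]
    refine sub.trans (Finset.sum_le_sum_of_subset_of_nonneg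
      (Finset.range_subset_range.mpr (by omega)) ?_)
    intro s _ _
    have : 0 ≤ (z * exp (-t)) ^ s * (1 - z) ^ (ℓ - s) * (ℓ.choose s : ℝ) :=
      mul_nonneg (mul_nonneg (pow_nonneg (mul_nonneg hz0 (exp_pos _).le) _)
        (pow_nonneg h1z _)) (Nat.cast_nonneg _)
    positivity
  have step2 : ∑ s ∈ range (ℓ + 1),
      (z * exp (-t)) ^ s * (1 - z) ^ (ℓ - s) * (ℓ.choose s : ℝ)
      = (z * exp (-t) + (1 - z)) ^ ℓ := by
    rw [add_pow]
  have step3 : (z * exp (-t) + (1 - z)) ^ ℓ ≤ exp (ℓ * (t ^ 2 / 8 - t * z)) := by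
    have hb : z * exp (-t) + (1 - z) ≤ exp (t ^ 2 / 8 - t * z) := by
      have := hoeff_bernoulli z hz0 hz1 t ht
      linarith
    have hb0 : 0 ≤ z * exp (-t) + (1 - z) := by positivity
    calc (z * exp (-t) + (1 - z)) ^ ℓ ≤ (exp (t ^ 2 / 8 - t * z)) ^ ℓ :=
          pow_le_pow_left₀ hb0 hb ℓ
      _ = exp (ℓ * (t ^ 2 / 8 - t * z)) := by rw [← Real.exp_nat_mul]
  calc ∑ s ∈ range m, (ℓ.choose s : ℝ) * z ^ s * (1 - z) ^ (ℓ - s)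
      ≤ exp (t * m) * ∑ s ∈ range (ℓ + 1),
          (z * exp (-t)) ^ s * (1 - z) ^ (ℓ - s) * (ℓ.choose s : ℝ) := step1
    _ = exp (t * m) * (z * exp (-t) + (1 - z)) ^ ℓ := by rw [step2]
    _ ≤ exp (t * m) * exp (ℓ * (t ^ 2 / 8 - t * z)) := by
        exact mul_le_mul_of_nonneg_left step3 (exp_pos _).le
    _ = exp (t * m + ℓ * (t ^ 2 / 8 - t * z)) := by rw [← Real.exp_add]
noncomputable section

def Wj (ℓ j : ℕ) : Submodule (ZMod 2) (Fin ℓ → ZMod 2) where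
  carrier := {v | ∀ k : Fin ℓ, j ≤ (k : ℕ) → v k = 0}
  add_mem' := by intro a b ha hb k hk; simp [Pi.add_apply, ha k hk, hb k hk]
  zero_mem' := by intro k hk; rfl
  smul_mem' := by intro c a ha k hk; simp [Pi.smul_apply, ha k hk]

lemma Ej_eq_Wj (ℓ j : ℕ) : Ej ℓ j = Wj ℓ j := by
  apply le_antisymm
  · rw [Ej, Submodule.span_le]
    rintro v ⟨k, hk, rfl⟩
    intro k' hk'
    have : k' ≠ k := by
      intro h; subst h; omega
    simp [Pi.single_apply, this.symm]
  · intro v hv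
    have hv' : ∀ k : Fin ℓ, j ≤ (k : ℕ) → v k = 0 := hv
    have hrep : v = ∑ k : Fin ℓ, v k • Pi.single k (1 : ZMod 2) := by
      funext x
      rw [Finset.sum_apply]
      simp only [Pi.smul_apply, Pi.single_apply, smul_eq_mul]
      simp [Finset.sum_ite_eq' Finset.univ x]
    rw [hrep]
    apply Submodule.sum_mem
    intro k _
    by_cases hk : (k : ℕ) < j
    · exact Submodule.smul_mem _ _ (Submodule.subset_span ⟨k, hk, rfl⟩)
    · rw [hv' k (by omega)]
      simp

lemma exists_linEquiv (V : Type*) [AddCommGroup V] [Module (ZMod 2) V]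
    [Module.Finite (ZMod 2) V] (v w : V) (hv : v ≠ 0) (hw : w ≠ 0) :
    ∃ g : V ≃ₗ[ZMod 2] V, g v = w := by
  have hv' : LinearIndepOn (ZMod 2) id ({v} : Set V) :=
    (linearIndependent_unique_iff).mpr (by simpa using hv)
  have hw' : LinearIndepOn (ZMod 2) id ({w} : Set V) :=
    (linearIndependent_unique_iff).mpr (by simpa using hw)
  let bv := Module.Basis.extend hv'
  let bw := Module.Basis.extend hw'
  have hvmem : v ∈ hv'.extend (Set.subset_univ _) := hv'.subset_extend _ rfl
  have hwmem : w ∈ hw'.extend (Set.subset_univ _) := hw'.subset_extend _ rfl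
  let e0 := bv.indexEquiv bw
  let e := e0.trans (Equiv.swap (e0 ⟨v, hvmem⟩) ⟨w, hwmem⟩)
  refine ⟨bv.equiv bw e, ?_⟩
  have h1 : bv ⟨v, hvmem⟩ = v := Module.Basis.extend_apply_self hv' ⟨v, hvmem⟩
  have h2 : bw ⟨w, hwmem⟩ = w := Module.Basis.extend_apply_self hw' ⟨w, hwmem⟩
  have h3 : e ⟨v, hvmem⟩ = ⟨w, hwmem⟩ := by
    simp [e, Equiv.swap_apply_left]
  calc (bv.equiv bw e) v = (bv.equiv bw e) (bv ⟨v, hvmem⟩) := by rw [h1]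
    _ = bw (e ⟨v, hvmem⟩) := bv.equiv_apply _ bw e
    _ = w := by rw [h3, h2]

section Counting

variable (ℓ : ℕ)

abbrev Vsp (ℓ : ℕ) := Fin ℓ → ZMod 2

/-- number of d-dim subspaces containing v -/
def Ncnt (ℓ d : ℕ) (v : Vsp ℓ) : ℕ :=
  (Finset.univ.filter (fun R : Submodule (ZMod 2) (Vsp ℓ) =>
    Module.finrank (ZMod 2) ↥R = d ∧ v ∈ R)).card

def Asub (ℓ d : ℕ) : Finset (Submodule (ZMod 2) (Vsp ℓ)) :=
  Finset.univ.filter (fun R => Module.finrank (ZMod 2) ↥R = d)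

lemma Ncnt_eq (d : ℕ) (v w : Vsp ℓ) (hv : v ≠ 0) (hw : w ≠ 0) :
    Ncnt ℓ d v = Ncnt ℓ d w := by
  obtain ⟨g, hg⟩ := exists_linEquiv (Vsp ℓ) v w hv hw
  unfold Ncnt
  apply Finset.card_bij' (fun R _ => Submodule.map (g : Vsp ℓ →ₗ[ZMod 2] Vsp ℓ) R)
    (fun R _ => Submodule.map (g.symm : Vsp ℓ →ₗ[ZMod 2] Vsp ℓ) R)
  · intro R hR
    simp only [Finset.mem_filter, Finset.mem_univ, true_and] at hR ⊢
    constructor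
    · rw [LinearEquiv.finrank_map_eq]; exact hR.1
    · exact ⟨v, hR.2, hg⟩
  · intro R hR
    simp only [Finset.mem_filter, Finset.mem_univ, true_and] at hR ⊢
    constructor
    · rw [LinearEquiv.finrank_map_eq]; exact hR.1
    · refine ⟨w, hR.2, ?_⟩
      rw [← hg]; simp
  · intro R _
    rw [← Submodule.map_comp]
    simp
  · intro R _
    rw [← Submodule.map_comp]
    simp

lemma card_nonzero_in (d : ℕ) (R : Submodule (ZMod 2) (Vsp ℓ))
    (hR : Module.finrank (ZMod 2) ↥R = d) :
    (Finset.univ.filter (fun v : Vsp ℓ => v ≠ 0 ∧ v ∈ R)).card = 2 ^ d - 1 := by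
  have h1 : (Finset.univ.filter (fun v : Vsp ℓ => v ∈ R)).card = 2 ^ d := by
    rw [← Fintype.card_subtype]
    have := Module.card_eq_pow_finrank (K := ZMod 2) (V := ↥R)
    simp only [ZMod.card] at this
    rw [this, hR]
  have h2 : Finset.univ.filter (fun v : Vsp ℓ => v ≠ 0 ∧ v ∈ R)
      = (Finset.univ.filter (fun v : Vsp ℓ => v ∈ R)).erase 0 := by
    ext v
    simp only [Finset.mem_filter, Finset.mem_erase, Finset.mem_univ, true_and]
  rw [h2, Finset.card_erase_of_mem (by simp [Finset.mem_filter]), h1]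

lemma double_count (d : ℕ) :
    ∑ v ∈ Finset.univ.filter (fun v : Vsp ℓ => v ≠ 0), Ncnt ℓ d v
      = (Asub ℓ d).card * (2 ^ d - 1) := by
  have key : ∀ v : Vsp ℓ,
      Ncnt ℓ d v = ∑ R ∈ Asub ℓ d, if v ∈ R then 1 else 0 := by
    intro v
    unfold Ncnt Asub
    rw [← Finset.filter_filter, Finset.card_filter]
  calc ∑ v ∈ Finset.univ.filter (fun v : Vsp ℓ => v ≠ 0), Ncnt ℓ d v
      = ∑ v ∈ Finset.univ.filter (fun v : Vsp ℓ => v ≠ 0),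
          ∑ R ∈ Asub ℓ d, if v ∈ R then 1 else 0 := by
        exact Finset.sum_congr rfl fun v _ => key v
    _ = ∑ R ∈ Asub ℓ d, ∑ v ∈ Finset.univ.filter (fun v : Vsp ℓ => v ≠ 0),
          if v ∈ R then 1 else 0 := Finset.sum_comm
    _ = ∑ R ∈ Asub ℓ d, (2 ^ d - 1) := by
        apply Finset.sum_congr rfl
        intro R hR
        rw [← Finset.card_filter, Finset.filter_filter]
        exact card_nonzero_in ℓ d R (by simpa [Asub] using hR)
    _ = (Asub ℓ d).card * (2 ^ d - 1) := by rw [Finset.sum_const, smul_eq_mul]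

lemma card_nonzero_total : (Finset.univ.filter (fun v : Vsp ℓ => v ≠ 0)).card = 2 ^ ℓ - 1 := by
  have h2 : Finset.univ.filter (fun v : Vsp ℓ => v ≠ 0)
      = Finset.univ.erase 0 := by
    ext v; simp
  rw [h2, Finset.card_erase_of_mem (Finset.mem_univ _), Finset.card_univ]
  congr 1
  rw [Fintype.card_fun]
  simp

lemma Ncnt_key (d : ℕ) (v : Vsp ℓ) (hv : v ≠ 0) :
    Ncnt ℓ d v * (2 ^ ℓ - 1) = (Asub ℓ d).card * (2 ^ d - 1) := by
  have h1 : ∑ w ∈ Finset.univ.filter (fun w : Vsp ℓ => w ≠ 0), Ncnt ℓ d w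
      = (2 ^ ℓ - 1) * Ncnt ℓ d v := by
    rw [Finset.sum_congr rfl (fun w hw => Ncnt_eq ℓ d w v
      (by simpa using (Finset.mem_filter.mp hw).2) hv)]
    rw [Finset.sum_const, smul_eq_mul, card_nonzero_total]
  rw [mul_comm, ← h1, double_count]

end Counting
section Counting2

variable (ℓ : ℕ)

lemma wj_card (j : ℕ) (hj : j ≤ ℓ) : Fintype.card ↥(Wj ℓ j) = 2 ^ j := by
  have e : ↥(Wj ℓ j) ≃ (Fin j → ZMod 2) := by
    refine ⟨fun v k => (v : Vsp ℓ) (Fin.castLE hj k),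
      fun x => ⟨fun k => if h : (k : ℕ) < j then x ⟨k, h⟩ else 0, ?_⟩, ?_, ?_⟩
    · intro k hk
      simp only [dif_neg (Nat.not_lt.mpr hk)]
    · intro v
      ext k
      by_cases h : (k : ℕ) < j
      · simp only [dif_pos h]
        congr 1
      · simp only [dif_neg h]
        exact (v.2 k (Nat.not_lt.mp h)).symm
    · intro x
      ext k
      simp only [Fin.coe_castLE, dif_pos k.2, Fin.eta]
  rw [Fintype.card_congr e, Fintype.card_fun]
  simp

lemma finrank_Wj (j : ℕ) (hj : j ≤ ℓ) :
    Module.finrank (ZMod 2) ↥(Wj ℓ j) = j := by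
  have h1 := Module.card_eq_pow_finrank (K := ZMod 2) (V := ↥(Wj ℓ j))
  simp only [ZMod.card] at h1
  rw [wj_card ℓ j hj] at h1
  exact (Nat.pow_right_injective (le_refl 2) h1.symm)

lemma finrank_Ej (j : ℕ) (hj : j ≤ ℓ) :
    Module.finrank (ZMod 2) ↥(Ej ℓ j) = j := by
  rw [Ej_eq_Wj]; exact finrank_Wj ℓ j hj

lemma Asub_pos (d : ℕ) (hd : d ≤ ℓ) : 0 < (Asub ℓ d).card := by
  apply Finset.card_pos.mpr
  exact ⟨Ej ℓ d, by simp [Asub, finrank_Ej ℓ d hd]⟩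

def Sfin (ℓ i : ℕ) : Finset (Vsp ℓ) :=
  Finset.univ.filter (fun v => v ∈ Ej ℓ i ∧ v ∉ Ej ℓ (i - 1))

lemma zmod2_ne_zero (a : ZMod 2) (ha : a ≠ 0) : a = 1 := by
  revert ha; revert a; decide

lemma Sfin_card (i : ℕ) (hi : 1 ≤ i) (hiℓ : i ≤ ℓ) :
    (Sfin ℓ i).card ≤ 2 ^ (i - 1) := by
  have hi1 : i - 1 ≤ ℓ := by omega
  have key : ∀ v ∈ Sfin ℓ i, ((∀ k : Fin ℓ, i ≤ (k : ℕ) → v k = 0) ∧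
      (∀ k : Fin ℓ, (k : ℕ) = i - 1 → v k = 1)) := by
    intro v hv
    simp only [Sfin, Finset.mem_filter, Finset.mem_univ, true_and] at hv
    rw [Ej_eq_Wj, Ej_eq_Wj] at hv
    obtain ⟨h1, h2⟩ := hv
    have h1' : ∀ k : Fin ℓ, i ≤ (k : ℕ) → v k = 0 := h1
    refine ⟨h1', ?_⟩
    have h2' : ¬ ∀ k : Fin ℓ, i - 1 ≤ (k : ℕ) → v k = 0 := h2
    push_neg at h2'
    obtain ⟨k0, hk0, hvk0⟩ := h2'
    have hk0i : (k0 : ℕ) = i - 1 := by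
      by_contra h
      exact hvk0 (h1' k0 (by omega))
    intro k hk
    have : k = k0 := Fin.ext (by omega)
    rw [this]
    exact zmod2_ne_zero _ hvk0
  calc (Sfin ℓ i).card ≤ (Finset.univ : Finset (Fin (i - 1) → ZMod 2)).card := by
        apply Finset.card_le_card_of_injOn
          (fun v (k : Fin (i - 1)) => v (Fin.castLE hi1 k))
        · intro a _; exact Finset.mem_univ _
        · intro v hv w hw hfvw
          obtain ⟨hv1, hv2⟩ := key v hv
          obtain ⟨hw1, hw2⟩ := key w hw
          funext k
          rcases lt_trichotomy (k : ℕ) (i - 1) with h | h | h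
          · have := congrFun hfvw ⟨(k : ℕ), h⟩
            simpa [Fin.castLE, Fin.ext_iff] using this
          · rw [hv2 k h, hw2 k h]
          · rw [hv1 k (by omega), hw1 k (by omega)]
    _ = 2 ^ (i - 1) := by rw [Finset.card_univ, Fintype.card_fun]; simp

lemma bad_card_bound (i s : ℕ) (hi : 1 ≤ i) (hiℓ : i ≤ ℓ) (hs : s ≤ ℓ) :
    ((Asub ℓ (ℓ - s)).filter (fun R : Submodule (ZMod 2) (Vsp ℓ) =>
        ¬ ((R : Set (Vsp ℓ)) ∩ ((Ej ℓ i : Set (Vsp ℓ)) \ (Ej ℓ (i - 1) : Set (Vsp ℓ))) = ∅))).card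
      * 2 ^ ℓ
      ≤ 2 ^ (i - 1) * 2 ^ (ℓ - s) * (Asub ℓ (ℓ - s)).card := by
  set d := ℓ - s with hd
  set bad := (Asub ℓ d).filter (fun R : Submodule (ZMod 2) (Vsp ℓ) =>
    ¬ ((R : Set (Vsp ℓ)) ∩ ((Ej ℓ i : Set (Vsp ℓ)) \ (Ej ℓ (i - 1) : Set (Vsp ℓ))) = ∅)) with hbad
  have hsub : bad ⊆ (Sfin ℓ i).biUnion
      (fun v => Finset.univ.filter (fun R : Submodule (ZMod 2) (Vsp ℓ) =>
        Module.finrank (ZMod 2) ↥R = d ∧ v ∈ R)) := by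
    intro R hR
    simp only [hbad, Finset.mem_filter, Asub, Finset.mem_univ, true_and] at hR
    obtain ⟨hfr, hne⟩ := hR
    obtain ⟨x, hxR, hxE, hxE'⟩ := Set.nonempty_iff_ne_empty.mpr hne
    rw [Finset.mem_biUnion]
    refine ⟨x, ?_, ?_⟩
    · simp only [Sfin, Finset.mem_filter, Finset.mem_univ, true_and]
      exact ⟨hxE, hxE'⟩
    · simp only [Finset.mem_filter, Finset.mem_univ, true_and]
      exact ⟨hfr, hxR⟩
  have h1 : bad.card ≤ ∑ v ∈ Sfin ℓ i, Ncnt ℓ d v :=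
    (Finset.card_le_card hsub).trans (Finset.card_biUnion_le)
  have h2 : ∀ v ∈ Sfin ℓ i, v ≠ 0 := by
    intro v hv
    simp only [Sfin, Finset.mem_filter, Finset.mem_univ, true_and] at hv
    intro h
    exact hv.2 (h ▸ (Ej ℓ (i - 1)).zero_mem)
  have h3 : bad.card * (2 ^ ℓ - 1) ≤ 2 ^ (i - 1) * ((Asub ℓ d).card * (2 ^ d - 1)) := by
    calc bad.card * (2 ^ ℓ - 1) ≤ (∑ v ∈ Sfin ℓ i, Ncnt ℓ d v) * (2 ^ ℓ - 1) :=
          Nat.mul_le_mul_right _ h1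
      _ = ∑ v ∈ Sfin ℓ i, Ncnt ℓ d v * (2 ^ ℓ - 1) := by rw [Finset.sum_mul]
      _ = ∑ v ∈ Sfin ℓ i, (Asub ℓ d).card * (2 ^ d - 1) := by
          apply Finset.sum_congr rfl
          intro v hv
          exact Ncnt_key ℓ d v (h2 v hv)
      _ = (Sfin ℓ i).card * ((Asub ℓ d).card * (2 ^ d - 1)) := by
          rw [Finset.sum_const, smul_eq_mul]
      _ ≤ 2 ^ (i - 1) * ((Asub ℓ d).card * (2 ^ d - 1)) :=
          Nat.mul_le_mul_right _ (Sfin_card ℓ i hi hiℓ)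
  have hbadA : bad.card ≤ (Asub ℓ d).card := Finset.card_le_card (Finset.filter_subset _ _)
  have h2ell : 1 ≤ 2 ^ ℓ := Nat.one_le_two_pow
  have h2d : 1 ≤ 2 ^ d := Nat.one_le_two_pow
  have h2i : 1 ≤ 2 ^ (i - 1) := Nat.one_le_two_pow
  zify [h2ell, h2d] at h3 ⊢
  have hbadA' : ((bad.card : ℤ)) ≤ ((Asub ℓ d).card : ℤ) := by exact_mod_cast hbadA
  have hI : (1 : ℤ) ≤ (2 : ℤ) ^ (i - 1) := by exact_mod_cast (h2i : (1:ℕ) ≤ 2 ^ (i-1))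
  have hA0 : (0 : ℤ) ≤ ((Asub ℓ d).card : ℤ) := by positivity
  nlinarith [mul_nonneg (sub_nonneg.mpr hI) hA0]

end Counting2
lemma pis_nonneg (ℓ i s : ℕ) : 0 ≤ pis ℓ i s := by
  unfold pis
  positivity

lemma pis_ge (ℓ i s : ℕ) (hi : 1 ≤ i) (hiℓ : i ≤ ℓ) (hs : s ≤ ℓ) :
    1 - (2 : ℝ) ^ (i - 1) * 2 ^ (ℓ - s) / 2 ^ ℓ ≤ pis ℓ i s := by
  classical
  set d := ℓ - s with hd
  set P : Submodule (ZMod 2) (Vsp ℓ) → Prop := fun R =>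
    (R : Set (Fin ℓ → ZMod 2)) ∩ ((Ej ℓ i : Set (Fin ℓ → ZMod 2)) \
        (Ej ℓ (i - 1) : Set (Fin ℓ → ZMod 2))) = ∅ with hP
  have hgood : Nat.card {R : Submodule (ZMod 2) (Fin ℓ → ZMod 2) //
      Module.finrank (ZMod 2) ↥R = d ∧
      (R : Set (Fin ℓ → ZMod 2)) ∩ ((Ej ℓ i : Set (Fin ℓ → ZMod 2)) \
        (Ej ℓ (i - 1) : Set (Fin ℓ → ZMod 2))) = ∅} = ((Asub ℓ d).filter P).card := by
    rw [Nat.card_eq_fintype_card]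
    rw [Fintype.card_subtype]
    unfold Asub
    rw [Finset.filter_filter]
  have hden : Nat.card {R : Submodule (ZMod 2) (Fin ℓ → ZMod 2) //
      Module.finrank (ZMod 2) ↥R = d} = (Asub ℓ d).card := by
    rw [Nat.card_eq_fintype_card, Fintype.card_subtype]
    rfl
  have hsplit : ((Asub ℓ d).filter P).card + ((Asub ℓ d).filter (fun R => ¬ P R)).card
      = (Asub ℓ d).card := Finset.card_filter_add_card_filter_not _
  have hApos : 0 < (Asub ℓ d).card := Asub_pos ℓ d (by omega)
  have hbad : ((Asub ℓ d).filter (fun R => ¬ P R)).card * 2 ^ ℓ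
      ≤ 2 ^ (i - 1) * 2 ^ d * (Asub ℓ d).card := bad_card_bound ℓ i s hi hiℓ hs
  have hpis : pis ℓ i s = ((Asub ℓ d).filter P).card / ((Asub ℓ d).card : ℝ) := by
    unfold pis
    rw [← hd, hgood, hden]
  rw [hpis]
  set A := ((Asub ℓ d).card : ℝ) with hA
  set B := (((Asub ℓ d).filter (fun R => ¬ P R)).card : ℝ) with hB
  have hApos' : (0 : ℝ) < A := by rw [hA]; exact_mod_cast hApos
  have hGA : (((Asub ℓ d).filter P).card : ℝ) = A - B := by
    rw [hA, hB]
    push_cast [← hsplit]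
    ring
  rw [hGA]
  have hBbound : B * 2 ^ ℓ ≤ 2 ^ (i - 1) * 2 ^ d * A := by
    rw [hB, hA]
    exact_mod_cast hbad
  have h2ℓ : (0 : ℝ) < 2 ^ ℓ := by positivity
  have : B / A ≤ 2 ^ (i - 1) * 2 ^ d / 2 ^ ℓ := by
    rw [div_le_div_iff₀ hApos' h2ℓ]
    nlinarith
  have hexpand : (A - B) / A = 1 - B / A := by field_simp
  rw [hexpand]
  linarith
theorem stmt13 (ℓ i : ℕ) (hℓ : 2 ≤ ℓ) (hi : 1 ≤ i) (hiℓ : i ≤ ℓ) (β δ : ℝ)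
    (hβ : 0 < β) (hδ : 0 < δ) (z : ℝ) (hz : z ∈ Set.Ioc (0 : ℝ) 1)
    (hzlb : z > (i : ℝ) / ℓ + (⌈δ * Real.logb 2 ℓ⌉ : ℝ) / ℓ +
      Real.sqrt (β * Real.log ℓ / (2 * ℓ))) :
    Favg ℓ i z > (1 - (ℓ : ℝ) ^ (-β)) * (1 - (ℓ : ℝ) ^ (-δ)) := by
  obtain ⟨hz0, hz1⟩ := hz
  have hℓ0 : (0 : ℝ) < ℓ := by positivity
  have hℓ1 : (1 : ℝ) < ℓ := by exact_mod_cast (by omega : 1 < ℓ)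
  have hlogℓ : 0 < Real.log ℓ := Real.log_pos hℓ1
  have hlogb : 0 < Real.logb 2 ℓ := Real.logb_pos (by norm_num) hℓ1
  -- the ceiling as a natural number
  set tn : ℕ := (⌈δ * Real.logb 2 ℓ⌉).toNat with htn_def
  have hceil_pos : (0 : ℤ) < ⌈δ * Real.logb 2 ℓ⌉ :=
    Int.ceil_pos.mpr (mul_pos hδ hlogb)
  have htn_cast : ((tn : ℕ) : ℝ) = ((⌈δ * Real.logb 2 ℓ⌉ : ℤ) : ℝ) := by
    rw [htn_def]
    exact_mod_cast Int.toNat_of_nonneg hceil_pos.le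
  have htnge : δ * Real.logb 2 ℓ ≤ (tn : ℝ) := by
    rw [htn_cast]; exact Int.le_ceil _
  have h2tn : (ℓ : ℝ) ^ δ ≤ 2 ^ tn := by
    have h1 : (ℓ : ℝ) = (2 : ℝ) ^ (Real.logb 2 ℓ) :=
      (Real.rpow_logb (by norm_num) (by norm_num) hℓ0).symm
    have h2 : (2 : ℝ) ^ (δ * Real.logb 2 ℓ) = (ℓ : ℝ) ^ δ := by
      rw [mul_comm, Real.rpow_mul (by norm_num : (0:ℝ) ≤ 2),
        Real.rpow_logb (by norm_num) (by norm_num) hℓ0]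
    rw [← h2, show ((2 : ℝ) ^ tn) = (2 : ℝ) ^ (tn : ℝ) from (Real.rpow_natCast 2 tn).symm]
    exact Real.rpow_le_rpow_of_exponent_le (by norm_num) htnge
  set m : ℕ := i + tn with hm_def
  set ε₀ : ℝ := Real.sqrt (β * Real.log ℓ / (2 * ℓ)) with hε₀_def
  have hε₀pos : 0 < ε₀ := Real.sqrt_pos.mpr (by positivity)
  have hzm : (m : ℝ) / ℓ + ε₀ < z := by
    have : ((i : ℝ) + tn) / ℓ = (i : ℝ) / ℓ + (tn : ℝ) / ℓ := by ring
    push_cast [hm_def]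
    rw [this]
    rw [htn_cast]
    linarith [hzlb]
  have hmℓR : (m : ℝ) / ℓ < 1 := by linarith
  have hmℓ : m ≤ ℓ := by
    have : (m : ℝ) < ℓ := (div_lt_one hℓ0).mp hmℓR
    exact_mod_cast this.le
  set ε : ℝ := z - (m : ℝ) / ℓ with hε_def
  have hεε₀ : ε₀ < ε := by rw [hε_def]; linarith
  have hε0 : 0 < ε := lt_trans hε₀pos hεε₀
  -- Chernoff bound on the head of the binomial sum
  have hcher := chernoff_tail ℓ m hmℓ z hz0.le hz1 (4 * ε) (by linarith)
  have hexpeq : (4 * ε) * m + ℓ * ((4 * ε) ^ 2 / 8 - (4 * ε) * z) = -(2 * ℓ * ε ^ 2) := by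
    have hz_eq : z = ε + (m : ℝ) / ℓ := by rw [hε_def]; ring
    rw [hz_eq]
    field_simp
    ring
  rw [hexpeq] at hcher
  have hstrict : Real.exp (-(2 * ℓ * ε ^ 2)) < (ℓ : ℝ) ^ (-β) := by
    have hsq : ε₀ ^ 2 = β * Real.log ℓ / (2 * ℓ) := Real.sq_sqrt (by positivity)
    have h1 : 2 * (ℓ : ℝ) * ε₀ ^ 2 = β * Real.log ℓ := by
      rw [hsq]; field_simp
    have h2 : 2 * (ℓ : ℝ) * ε₀ ^ 2 < 2 * ℓ * ε ^ 2 := by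
      have : ε₀ ^ 2 < ε ^ 2 := by nlinarith
      nlinarith
    have h3 : (ℓ : ℝ) ^ (-β) = Real.exp (-(β * Real.log ℓ)) := by
      rw [Real.rpow_def_of_pos hℓ0]
      ring_nf
    rw [h3]
    apply Real.exp_lt_exp.mpr
    rw [← h1]
    linarith
  have hhead : ∑ s ∈ Finset.range m, (Nat.choose ℓ s : ℝ) * z ^ s * (1 - z) ^ (ℓ - s)
      < (ℓ : ℝ) ^ (-β) := lt_of_le_of_lt hcher hstrict
  -- weight function and positivity
  set w : ℕ → ℝ := fun s => (Nat.choose ℓ s : ℝ) * z ^ s * (1 - z) ^ (ℓ - s) with hw_def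
  have hwnn : ∀ s, 0 ≤ w s := by
    intro s
    have h1z : (0:ℝ) ≤ 1 - z := by linarith
    exact mul_nonneg (mul_nonneg (Nat.cast_nonneg _) (pow_nonneg hz0.le _)) (pow_nonneg h1z _)
  -- pis lower bound on the tail
  have hδ1 : (ℓ : ℝ) ^ (-δ) < 1 :=
    Real.rpow_lt_one_of_one_lt_of_neg hℓ1 (by linarith)
  have hpis_tail : ∀ s ∈ Finset.Ico m (ℓ + 1), 1 - (ℓ : ℝ) ^ (-δ) ≤ pis ℓ i s := by
    intro s hs
    rw [Finset.mem_Ico] at hs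
    obtain ⟨hsm, hsl⟩ := hs
    have hsℓ : s ≤ ℓ := by omega
    have step0 := pis_ge ℓ i s hi hiℓ hsℓ
    have stepa : (2 : ℝ) ^ (i - 1) * 2 ^ (ℓ - s) / 2 ^ ℓ = 2 ^ (i - 1) / 2 ^ s := by
      rw [div_eq_div_iff (by positivity) (by positivity), ← pow_add, ← pow_add, ← pow_add]
      congr 1
      omega
    have stepb : (2 : ℝ) ^ (i - 1) / 2 ^ s ≤ 1 / 2 ^ tn := by
      rw [div_le_div_iff₀ (by positivity) (by positivity), ← pow_add, one_mul]
      apply pow_le_pow_right₀ (by norm_num)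
      omega
    have stepc : (1 : ℝ) / 2 ^ tn ≤ (ℓ : ℝ) ^ (-δ) := by
      rw [Real.rpow_neg hℓ0.le, ← one_div]
      apply one_div_le_one_div_of_le (by positivity) h2tn
    calc 1 - (ℓ : ℝ) ^ (-δ) ≤ 1 - (2:ℝ) ^ (i-1) * 2 ^ (ℓ - s) / 2 ^ ℓ := by
          rw [stepa]; linarith
      _ ≤ pis ℓ i s := step0
  -- split the sum
  have hsplit : ∑ s ∈ Finset.range (ℓ + 1), w s * pis ℓ i s
      = ∑ s ∈ Finset.Ico 0 m, w s * pis ℓ i s + ∑ s ∈ Finset.Ico m (ℓ + 1), w s * pis ℓ i s := by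
    rw [Finset.range_eq_Ico, ← Finset.sum_Ico_consecutive _ (Nat.zero_le m) (by omega)]
  have hsplitw : ∑ s ∈ Finset.range (ℓ + 1), w s
      = ∑ s ∈ Finset.Ico 0 m, w s + ∑ s ∈ Finset.Ico m (ℓ + 1), w s := by
    rw [Finset.range_eq_Ico, ← Finset.sum_Ico_consecutive _ (Nat.zero_le m) (by omega)]
  have hsum1 : ∑ s ∈ Finset.range (ℓ + 1), w s = 1 := binom_sum_one ℓ z
  have hheadw : ∑ s ∈ Finset.Ico 0 m, w s < (ℓ : ℝ) ^ (-β) := by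
    rw [← Finset.range_eq_Ico]
    exact hhead
  have htailw : 1 - (ℓ : ℝ) ^ (-β) < ∑ s ∈ Finset.Ico m (ℓ + 1), w s := by
    have := hsplitw
    rw [hsum1] at this
    linarith
  -- lower-bound Favg
  have hFavg : Favg ℓ i z = ∑ s ∈ Finset.range (ℓ + 1), w s * pis ℓ i s := by
    unfold Favg
    apply Finset.sum_congr rfl
    intro s _
    rw [hw_def]
  rw [hFavg, hsplit]
  have hpart1 : 0 ≤ ∑ s ∈ Finset.Ico 0 m, w s * pis ℓ i s :=
    Finset.sum_nonneg fun s _ => mul_nonneg (hwnn s) (pis_nonneg ℓ i s)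
  have hpart2 : (1 - (ℓ : ℝ) ^ (-δ)) * ∑ s ∈ Finset.Ico m (ℓ + 1), w s
      ≤ ∑ s ∈ Finset.Ico m (ℓ + 1), w s * pis ℓ i s := by
    rw [Finset.mul_sum]
    apply Finset.sum_le_sum
    intro s hs
    calc (1 - (ℓ : ℝ) ^ (-δ)) * w s
        ≤ pis ℓ i s * w s := mul_le_mul_of_nonneg_right (hpis_tail s hs) (hwnn s)
      _ = w s * pis ℓ i s := mul_comm _ _
  have h01 : 0 < 1 - (ℓ : ℝ) ^ (-δ) := by linarith
  have hfinal : (1 - (ℓ : ℝ) ^ (-δ)) * (1 - (ℓ : ℝ) ^ (-β))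
      < (1 - (ℓ : ℝ) ^ (-δ)) * ∑ s ∈ Finset.Ico m (ℓ + 1), w s :=
    (mul_lt_mul_iff_right₀ h01).mpr htailw
  have hcomm : (1 - (ℓ : ℝ) ^ (-β)) * (1 - (ℓ : ℝ) ^ (-δ))
      = (1 - (ℓ : ℝ) ^ (-δ)) * (1 - (ℓ : ℝ) ^ (-β)) := mul_comm _ _
  linarith

end
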